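/- Let V, Y be real Hilbert spaces, ι : V → Y a bounded linear map, and a : V × V → ℝ a symmetric bounded coercive bilinear form (|a(v,w)| ≤ a_max‖v‖_V‖w‖_V and a(v,v) ≥ a_min‖v‖_V² with 0 < a_min ≤ a_max). Let V_f ⊆ V be a closed subspace satisfying ‖ι v‖_Y ≤ C_P H ‖v‖_V for all v ∈ V_f, for some constants C_P, H > 0, and let V_H := {w ∈ V : a(w,v) = 0 for all v ∈ V_f} be its a-orthogonal complement. Let ρ ∈ Y, let z ∈ V satisfy a(z,v) = ⟪ρ, ιv⟫_Y for all v ∈ V, and let z_H ∈ V_H satisfy a(z_H, w) = ⟪ρ, ιw⟫_Y for all w ∈ V_H. Then ‖z − z_H‖_V ≤ (a_max/a_min)^{1/2} (C_P H / a_min) ‖ρ‖_Y. -/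

import Mathlib

open scoped RealInnerProductSpace

set_option maxHeartbeats 1000000 in
/-- Accuracy of the Galerkin solution in the global GRPS space (Theorem 3.3,
abstract form): `V_H` is the `a`-orthogonal complement of the fine space `V_f`,
which satisfies a Poincaré-type inequality with constant `C_P H`. -/
theorem stmt13
    {V Y : Type*}
    [NormedAddCommGroup V] [InnerProductSpace ℝ V] [CompleteSpace V]
    [NormedAddCommGroup Y] [InnerProductSpace ℝ Y] [CompleteSpace Y]
    (ι : V →L[ℝ] Y)
    (a : V →ₗ[ℝ] V →ₗ[ℝ] ℝ)
    (a_min a_max : ℝ)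
    (ha_min : 0 < a_min) (hminmax : a_min ≤ a_max)
    (hsym : ∀ v w : V, a v w = a w v)
    (hbound : ∀ v w : V, |a v w| ≤ a_max * ‖v‖ * ‖w‖)
    (hcoer : ∀ v : V, a_min * ‖v‖ ^ 2 ≤ a v v)
    (V_f : Submodule ℝ V) (hVf : IsClosed (V_f : Set V))
    (C_P H : ℝ) (hCP : 0 < C_P) (hH : 0 < H)
    (hPoincare : ∀ v ∈ V_f, ‖ι v‖ ≤ C_P * H * ‖v‖)
    (ρ : Y) (z z_H : V)
    (hz : ∀ v : V, a z v = ⟪ρ, ι v⟫)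
    (hzH_mem : z_H ∈ {w : V | ∀ v ∈ V_f, a w v = 0})
    (hzH_eq : ∀ w ∈ {w : V | ∀ v ∈ V_f, a w v = 0}, a z_H w = ⟪ρ, ι w⟫) :
    ‖z - z_H‖ ≤ Real.sqrt (a_max / a_min) * (C_P * H / a_min) * ‖ρ‖ := by
  set e := z - z_H with he
  -- Galerkin orthogonality: a e w = 0 for all w in the a-orthogonal complement of V_f
  have horth : ∀ w ∈ {w : V | ∀ v ∈ V_f, a w v = 0}, a e w = 0 := by
    intro w hw
    have : a e w = a z w - a z_H w := by simp [he]
    rw [this, hz w, hzH_eq w hw]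
    ring
  -- V_f is a Hilbert space
  haveI : CompleteSpace V_f := hVf.completeSpace_coe
  -- the restricted bilinear form on V_f, as a continuous bilinear form
  set B : V_f →L[ℝ] V_f →L[ℝ] ℝ :=
    LinearMap.mkContinuous₂ (a.compl₁₂ V_f.subtype V_f.subtype) a_max
      (fun x y => by
        simpa using hbound (x : V) (y : V)) with hB
  have hBapp : ∀ x y : V_f, B x y = a (x : V) (y : V) := fun x y => rfl
  have hBcoer : IsCoercive B := by
    refine ⟨a_min, ha_min, fun u => ?_⟩
    have := hcoer (u : V)
    calc a_min * ‖u‖ * ‖u‖ = a_min * ‖(u : V)‖ ^ 2 := by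
          rw [pow_two]; ring_nf; rfl
      _ ≤ a (u : V) (u : V) := hcoer _
      _ = B u u := (hBapp u u).symm
  -- the functional v ↦ a e v on V_f, as a continuous linear functional
  set ℓ : V_f →L[ℝ] ℝ :=
    LinearMap.mkContinuous ((a e).comp V_f.subtype) (a_max * ‖e‖)
      (fun x => by
        have := hbound e (x : V)
        simpa [mul_assoc] using this) with hℓ
  have hℓapp : ∀ x : V_f, ℓ x = a e (x : V) := fun x => rfl
  -- Riesz representation of ℓ
  set y : V_f := (InnerProductSpace.toDual ℝ V_f).symm ℓ with hy
  have hyapp : ∀ x : V_f, ⟪y, x⟫ = ℓ x := fun x =>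
    InnerProductSpace.toDual_symm_apply
  -- Lax–Milgram: f ∈ V_f with a f v = a e v for all v ∈ V_f
  set f : V_f := hBcoer.continuousLinearEquivOfBilin.symm y with hf
  have hfapp : ∀ x : V_f, a (f : V) (x : V) = a e (x : V) := by
    intro x
    have h1 : ⟪hBcoer.continuousLinearEquivOfBilin f, x⟫ = B f x :=
      hBcoer.continuousLinearEquivOfBilin_apply f x
    have h2 : hBcoer.continuousLinearEquivOfBilin f = y := by
      simp [hf]
    rw [h2, hyapp] at h1
    rw [← hBapp, ← h1, hℓapp]
  -- e - f ∈ a-orthogonal complement of V_f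
  have hef : (e - (f : V)) ∈ {w : V | ∀ v ∈ V_f, a w v = 0} := by
    intro v hv
    have : a (e - (f : V)) v = a e v - a (f : V) v := by simp
    rw [this, hfapp ⟨v, hv⟩]
    ring
  -- hence e = f ∈ V_f
  have hefzero : a (e - (f : V)) (e - (f : V)) = 0 := by
    have h1 : a e (e - (f : V)) = 0 := horth _ hef
    have h2 : a (f : V) (e - (f : V)) = 0 := by
      rw [hsym]; exact hef (f : V) f.2
    have : a (e - (f : V)) (e - (f : V)) = a e (e - (f : V)) - a (f : V) (e - (f : V)) := by
      simp
    rw [this, h1, h2]; ring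
  have heVf : e ∈ V_f := by
    have h0 : a_min * ‖e - (f : V)‖ ^ 2 ≤ 0 := hefzero ▸ hcoer (e - (f : V))
    have h1 : ‖e - (f : V)‖ ^ 2 ≤ 0 :=
      (mul_le_mul_iff_right₀ ha_min).mp (by simpa using h0)
    have h2 : e - (f : V) = 0 := by
      have := sq_eq_zero_iff.mp (le_antisymm h1 (sq_nonneg _))
      simpa [norm_eq_zero] using this
    have h3 : e = (f : V) := sub_eq_zero.mp h2
    rw [h3]; exact f.2
  -- energy estimate
  have hkey : a_min * ‖e‖ ^ 2 ≤ C_P * H * ‖ρ‖ * ‖e‖ := by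
    have h1 : a e e = ⟪ρ, ι e⟫ := by
      have h2 : a z_H e = 0 := hzH_mem e heVf
      have : a e e = a z e - a z_H e := by simp [he]
      rw [this, hz e, h2]; ring
    calc a_min * ‖e‖ ^ 2 ≤ a e e := hcoer e
      _ = ⟪ρ, ι e⟫ := h1
      _ ≤ ‖ρ‖ * ‖ι e‖ := real_inner_le_norm ρ (ι e)
      _ ≤ ‖ρ‖ * (C_P * H * ‖e‖) := by
          have := hPoincare e heVf
          exact mul_le_mul_of_nonneg_left this (norm_nonneg ρ)
      _ = C_P * H * ‖ρ‖ * ‖e‖ := by ring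
  have hbase : ‖e‖ ≤ C_P * H / a_min * ‖ρ‖ := by
    rcases eq_or_lt_of_le (norm_nonneg e) with h | h
    · rw [← h]; positivity
    · have hk2 : (a_min * ‖e‖) * ‖e‖ ≤ (C_P * H * ‖ρ‖) * ‖e‖ := by
        calc (a_min * ‖e‖) * ‖e‖ = a_min * ‖e‖ ^ 2 := by ring
          _ ≤ C_P * H * ‖ρ‖ * ‖e‖ := hkey
      have h2 : a_min * ‖e‖ ≤ C_P * H * ‖ρ‖ := le_of_mul_le_mul_right hk2 h
      rw [div_mul_eq_mul_div, le_div_iff₀ ha_min, mul_comm]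
      linarith
  have hsqrt : 1 ≤ Real.sqrt (a_max / a_min) := by
    rw [show (1 : ℝ) = Real.sqrt 1 by simp]
    apply Real.sqrt_le_sqrt
    rw [le_div_iff₀ ha_min]; linarith
  calc ‖e‖ ≤ C_P * H / a_min * ‖ρ‖ := hbase
    _ = 1 * (C_P * H / a_min) * ‖ρ‖ := by ring
    _ ≤ Real.sqrt (a_max / a_min) * (C_P * H / a_min) * ‖ρ‖ := by
        apply mul_le_mul_of_nonneg_right _ (norm_nonneg ρ)
        apply mul_le_mul_of_nonneg_right hsqrt
        positivity
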